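/- For every integer n ≥ 1, the number of cyclic permutations of length n avoiding both cyclic patterns [1324] and [1342] equals 1 + C(n−1, 2); that is, #Av_n([1324],[1342]) = 1 + binom(n−1, 2). -/

import Mathlib

/-- A sequence `σ` of length `n` (with distinct values) contains the pattern `π`
of length `k` if some subsequence of `σ` is order isomorphic to `π`. -/
def ContainsPat {n k : ℕ} (σ : Fin n → Fin n) (π : Fin k → ℕ) : Prop :=
  ∃ f : Fin k → Fin n, StrictMono f ∧ ∀ i j : Fin k, π i < π j ↔ σ (f i) < σ (f j)

/-- The rotation of the sequence `σ` starting at position `r`. -/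
def rotSeq {n : ℕ} (σ : Fin n → Fin n) (r : Fin n) : Fin n → Fin n :=
  fun i => σ (i + r)

/-- The cyclic permutation `[σ]` contains the cyclic pattern `[π]` if some
rotation of `σ` contains `π` linearly. -/
def CycContains {n k : ℕ} (σ : Fin n → Fin n) (π : Fin k → ℕ) : Prop :=
  ∃ r : Fin n, ContainsPat (rotSeq σ r) π

/-- The cyclic permutation `[σ]` avoids the cyclic pattern `[π]`. -/
def CycAvoids {n k : ℕ} (σ : Fin n → Fin n) (π : Fin k → ℕ) : Prop :=
  ¬ CycContains σ π

/-- The cyclic permutation `[σ]`, i.e. the set of all rotations of `σ`. -/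
def CycClass {n : ℕ} (σ : Fin n → Fin n) : Set (Fin n → Fin n) :=
  Set.range (rotSeq σ)

/-- The set of cyclic permutations (rotation classes) of length `n` all of whose
representatives are permutations and which satisfy the (rotation-invariant)
predicate `P`. -/
def AvClasses (n : ℕ) (P : (Fin n → Fin n) → Prop) : Set (Set (Fin n → Fin n)) :=
  { C | ∃ σ : Equiv.Perm (Fin n), C = CycClass ⇑σ ∧ P ⇑σ }

/-- The cyclic descent number: the number of indices `i` (mod `n`) with
`σ i > σ (i+1)`. -/
def cdes {n : ℕ} (σ : Fin n → Fin n) : ℕ :=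
  (Finset.univ.filter fun i : Fin n =>
    σ ⟨(↑i + 1) % n, Nat.mod_lt _ i.pos⟩ < σ i).card

/-- The cyclic peak number: the number of indices `i` (mod `n`) with
`σ (i-1) < σ i > σ (i+1)`. -/
def cpk {n : ℕ} (σ : Fin n → Fin n) : ℕ :=
  (Finset.univ.filter fun i : Fin n =>
    σ ⟨(↑i + (n - 1)) % n, Nat.mod_lt _ i.pos⟩ < σ i ∧
    σ ⟨(↑i + 1) % n, Nat.mod_lt _ i.pos⟩ < σ i).card

lemma fin_sub_add {n : ℕ} (a b : Fin n) : a - b + b = a := by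
  haveI : NeZero n := ⟨a.pos.ne'⟩
  exact sub_add_cancel a b

lemma rotSeq_zero {n : ℕ} [NeZero n] (σ : Fin n → Fin n) : rotSeq σ 0 = σ := by
  funext i; simp [rotSeq]

lemma rotSeq_rotSeq {n : ℕ} (σ : Fin n → Fin n) (r s : Fin n) :
    rotSeq (rotSeq σ r) s = rotSeq σ (s + r) := by
  funext i; simp [rotSeq, add_assoc]

lemma cycContains_rotSeq {n k : ℕ} (σ : Fin n → Fin n) (r : Fin n) (π : Fin k → ℕ) :
    CycContains (rotSeq σ r) π ↔ CycContains σ π := by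
  constructor
  · rintro ⟨s, h⟩; exact ⟨s + r, by rwa [rotSeq_rotSeq] at h⟩
  · rintro ⟨s, h⟩; exact ⟨s - r, by rwa [rotSeq_rotSeq, fin_sub_add]⟩

lemma cycClass_rotSeq {n : ℕ} (σ : Fin n → Fin n) (r : Fin n) :
    CycClass (rotSeq σ r) = CycClass σ := by
  ext τ
  constructor
  · rintro ⟨s, rfl⟩; exact ⟨s + r, (rotSeq_rotSeq σ r s).symm⟩
  · rintro ⟨s, rfl⟩
    exact ⟨s - r, by rw [rotSeq_rotSeq, fin_sub_add]⟩
section Master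
variable {n : ℕ} {w : Fin n → Fin n} {D : Fin n → Prop}

/-- Kill lemmas: given the D-structure, certain 4-point patterns are impossible. -/
lemma kill1324 (H1 : ∀ i j : Fin n, i < j → w j < w i → D i)
    (H2 : ∀ i j : Fin n, i < j → D i → w j < w i)
    (q0 q1 q2 q3 : Fin n) (o1 : q0 < q1) (o2 : q1 < q2) (o3 : q2 < q3)
    (h1 : w q0 < w q2) (h2 : w q2 < w q1) (h3 : w q1 < w q3) : False :=
  absurd h3 (not_lt.mpr (le_of_lt (H2 q1 q3 (o2.trans o3) (H1 q1 q2 o2 h2))))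

lemma kill1342 (H1 : ∀ i j : Fin n, i < j → w j < w i → D i)
    (H2 : ∀ i j : Fin n, i < j → D i → w j < w i)
    (q0 q1 q2 q3 : Fin n) (o1 : q0 < q1) (o2 : q1 < q2) (o3 : q2 < q3)
    (h1 : w q0 < w q3) (h2 : w q3 < w q1) (h3 : w q1 < w q2) : False :=
  absurd h3 (not_lt.mpr (le_of_lt (H2 q1 q2 o2 (H1 q1 q3 (o2.trans o3) h2))))

lemma kill3241 (H1 : ∀ i j : Fin n, i < j → w j < w i → D i)
    (H2 : ∀ i j : Fin n, i < j → D i → w j < w i)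
    (q0 q1 q2 q3 : Fin n) (o1 : q0 < q1) (o2 : q1 < q2) (o3 : q2 < q3)
    (h1 : w q3 < w q1) (h2 : w q1 < w q0) (h3 : w q0 < w q2) : False :=
  absurd h3 (not_lt.mpr (le_of_lt (H2 q0 q2 (o1.trans o2) (H1 q0 q1 o1 h2))))

lemma kill2413 (H1 : ∀ i j : Fin n, i < j → w j < w i → D i)
    (H2 : ∀ i j : Fin n, i < j → D i → w j < w i)
    (q0 q1 q2 q3 : Fin n) (o1 : q0 < q1) (o2 : q1 < q2) (o3 : q2 < q3)
    (h1 : w q2 < w q0) (h2 : w q0 < w q3) (h3 : w q3 < w q1) : False :=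
  absurd (h2.trans h3) (not_lt.mpr (le_of_lt (H2 q0 q1 o1 (H1 q0 q2 (o1.trans o2) h1))))

lemma kill4132 (H1 : ∀ i j : Fin n, i < j → w j < w i → D i)
    (H2 : ∀ i j : Fin n, i < j → D i → w j < w i)
    (H3 : ∀ i j l : Fin n, i < j → j < l → D i → D l → D j)
    (q0 q1 q2 q3 : Fin n) (o1 : q0 < q1) (o2 : q1 < q2) (o3 : q2 < q3)
    (h1 : w q1 < w q3) (h2 : w q3 < w q2) (h3 : w q2 < w q0) : False := by
  have d0 : D q0 := H1 q0 q1 o1 ((h1.trans h2).trans h3)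
  have d2 : D q2 := H1 q2 q3 o3 h2
  have d1 : D q1 := H3 q0 q1 q2 o1 o2 d0 d2
  exact absurd (h1.trans h2) (not_lt.mpr (le_of_lt (H2 q1 q2 o2 d1)))

lemma kill3421 (H1 : ∀ i j : Fin n, i < j → w j < w i → D i)
    (H2 : ∀ i j : Fin n, i < j → D i → w j < w i)
    (q0 q1 q2 q3 : Fin n) (o1 : q0 < q1) (o2 : q1 < q2) (o3 : q2 < q3)
    (h1 : w q3 < w q2) (h2 : w q2 < w q0) (h3 : w q0 < w q1) : False :=
  absurd h3 (not_lt.mpr (le_of_lt (H2 q0 q1 o1 (H1 q0 q2 (o1.trans o2) h2))))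

lemma kill4213 (H1 : ∀ i j : Fin n, i < j → w j < w i → D i)
    (H2 : ∀ i j : Fin n, i < j → D i → w j < w i)
    (q0 q1 q2 q3 : Fin n) (o1 : q0 < q1) (o2 : q1 < q2) (o3 : q2 < q3)
    (h1 : w q2 < w q1) (h2 : w q1 < w q3) (h3 : w q3 < w q0) : False :=
  absurd h2 (not_lt.mpr (le_of_lt (H2 q1 q3 (o2.trans o3) (H1 q1 q2 o2 h1))))

lemma kill2134 (H1 : ∀ i j : Fin n, i < j → w j < w i → D i)
    (H2 : ∀ i j : Fin n, i < j → D i → w j < w i)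
    (q0 q1 q2 q3 : Fin n) (o1 : q0 < q1) (o2 : q1 < q2) (o3 : q2 < q3)
    (h1 : w q1 < w q0) (h2 : w q0 < w q2) (h3 : w q2 < w q3) : False :=
  absurd h2 (not_lt.mpr (le_of_lt (H2 q0 q2 (o1.trans o2) (H1 q0 q1 o1 h1))))

lemma avoid_master (H1 : ∀ i j : Fin n, i < j → w j < w i → D i)
    (H2 : ∀ i j : Fin n, i < j → D i → w j < w i)
    (H3 : ∀ i j l : Fin n, i < j → j < l → D i → D l → D j) :
    CycAvoids w ![1,3,2,4] ∧ CycAvoids w ![1,3,4,2] := by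
  have key : ∀ (r : Fin n) (f : Fin 4 → Fin n), StrictMono f →
      (w (f 0 + r) < w (f 2 + r) ∧ w (f 2 + r) < w (f 1 + r) ∧ w (f 1 + r) < w (f 3 + r)) ∨
      (w (f 0 + r) < w (f 3 + r) ∧ w (f 3 + r) < w (f 1 + r) ∧ w (f 1 + r) < w (f 2 + r)) →
      False := by
    intro r f hmono hpat
    have hfn : ∀ i : Fin 4, (f i).val < n := fun i => (f i).isLt
    have m01 : (f 0).val < (f 1).val := hmono (by decide)
    have m12 : (f 1).val < (f 2).val := hmono (by decide)
    have m23 : (f 2).val < (f 3).val := hmono (by decide)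
    have hr : r.val < n := r.isLt
    have hval : ∀ i : Fin 4, (f i + r).val = ((f i).val + r.val) % n :=
      fun i => Fin.val_add _ _
    -- case analysis on wraps
    have mklt : ∀ i j : Fin 4, ((f i).val + r.val) % n < ((f j).val + r.val) % n →
        f i + r < f j + r := by
      intro i j h
      rw [Fin.lt_def, hval, hval]; exact h
    have ms : ∀ t : ℕ, t < n → t % n = t := fun t h => Nat.mod_eq_of_lt h
    have mb : ∀ t : ℕ, n ≤ t → t < 2*n → t % n = t - n := by
      intro t h1 h2
      rw [Nat.mod_eq_sub_mod h1, Nat.mod_eq_of_lt (by omega)]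
    rcases lt_or_ge ((f 3).val + r.val) n with h3 | h3
    · -- no wrap: positions sorted as is
      have o1 : f 0 + r < f 1 + r := mklt 0 1 (by rw [ms _ (by omega), ms _ (by omega)]; omega)
      have o2 : f 1 + r < f 2 + r := mklt 1 2 (by rw [ms _ (by omega), ms _ (by omega)]; omega)
      have o3 : f 2 + r < f 3 + r := mklt 2 3 (by rw [ms _ (by omega), ms _ h3]; omega)
      rcases hpat with ⟨a,b,c⟩ | ⟨a,b,c⟩
      · exact kill1324 H1 H2 _ _ _ _ o1 o2 o3 a b c
      · exact kill1342 H1 H2 _ _ _ _ o1 o2 o3 a b c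
    · rcases lt_or_ge ((f 2).val + r.val) n with h2 | h2
      · -- only index 3 wraps: order p3 < p0 < p1 < p2
        have o1 : f 3 + r < f 0 + r := mklt 3 0 (by
          rw [mb _ h3 (by omega), ms _ (by omega)]; omega)
        have o2 : f 0 + r < f 1 + r := mklt 0 1 (by rw [ms _ (by omega), ms _ (by omega)]; omega)
        have o3 : f 1 + r < f 2 + r := mklt 1 2 (by rw [ms _ (by omega), ms _ h2]; omega)
        rcases hpat with ⟨a,b,c⟩ | ⟨a,b,c⟩
        · exact kill4132 H1 H2 H3 _ _ _ _ o1 o2 o3 a b c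
        · exact kill2134 H1 H2 _ _ _ _ o1 o2 o3 a b c
      · rcases lt_or_ge ((f 1).val + r.val) n with h1 | h1
        · -- indices 2,3 wrap: order p2 < p3 < p0 < p1
          have o1 : f 2 + r < f 3 + r := mklt 2 3 (by
            rw [mb _ h2 (by omega), mb _ h3 (by omega)]; omega)
          have o2 : f 3 + r < f 0 + r := mklt 3 0 (by
            rw [mb _ h3 (by omega), ms _ (by omega)]; omega)
          have o3 : f 0 + r < f 1 + r := mklt 0 1 (by rw [ms _ (by omega), ms _ h1]; omega)
          rcases hpat with ⟨a,b,c⟩ | ⟨a,b,c⟩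
          · exact kill2413 H1 H2 _ _ _ _ o1 o2 o3 a b c
          · exact kill4213 H1 H2 _ _ _ _ o1 o2 o3 a b c
        · rcases lt_or_ge ((f 0).val + r.val) n with h0 | h0
          · -- indices 1,2,3 wrap: order p1 < p2 < p3 < p0
            have o1 : f 1 + r < f 2 + r := mklt 1 2 (by
              rw [mb _ h1 (by omega), mb _ h2 (by omega)]; omega)
            have o2 : f 2 + r < f 3 + r := mklt 2 3 (by
              rw [mb _ h2 (by omega), mb _ h3 (by omega)]; omega)
            have o3 : f 3 + r < f 0 + r := mklt 3 0 (by
              rw [mb _ h3 (by omega), ms _ h0]; omega)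
            rcases hpat with ⟨a,b,c⟩ | ⟨a,b,c⟩
            · exact kill3241 H1 H2 _ _ _ _ o1 o2 o3 a b c
            · exact kill3421 H1 H2 _ _ _ _ o1 o2 o3 a b c
          · -- all wrap: sorted as is
            have o1 : f 0 + r < f 1 + r := mklt 0 1 (by
              rw [mb _ h0 (by omega), mb _ h1 (by omega)]; omega)
            have o2 : f 1 + r < f 2 + r := mklt 1 2 (by
              rw [mb _ h1 (by omega), mb _ h2 (by omega)]; omega)
            have o3 : f 2 + r < f 3 + r := mklt 2 3 (by
              rw [mb _ h2 (by omega), mb _ h3 (by omega)]; omega)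
            rcases hpat with ⟨a,b,c⟩ | ⟨a,b,c⟩
            · exact kill1324 H1 H2 _ _ _ _ o1 o2 o3 a b c
            · exact kill1342 H1 H2 _ _ _ _ o1 o2 o3 a b c
  constructor
  · rintro ⟨r, f, hmono, hiso⟩
    refine key r f hmono (Or.inl ⟨?_, ?_, ?_⟩)
    · exact (hiso 0 2).mp (by decide)
    · exact (hiso 2 1).mp (by decide)
    · exact (hiso 1 3).mp (by decide)
  · rintro ⟨r, f, hmono, hiso⟩
    refine key r f hmono (Or.inr ⟨?_, ?_, ?_⟩)
    · exact (hiso 0 3).mp (by decide)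
    · exact (hiso 3 1).mp (by decide)
    · exact (hiso 1 2).mp (by decide)

end Master
def Wfun (n k m : ℕ) : Fin n → Fin n := fun i =>
  if i.val < k then i
  else if i.val < k + (n - m) then ⟨n - 1 - (i.val - k), by have := i.isLt; omega⟩
  else ⟨i.val - (n - m), by have := i.isLt; omega⟩

section WfunFacts
variable {n k m : ℕ}

lemma Wfun_val (i : Fin n) : (Wfun n k m i).val =
    if i.val < k then i.val
    else if i.val < k + (n - m) then n - 1 - (i.val - k)
    else i.val - (n - m) := by
  simp only [Wfun]
  split_ifs <;> rfl

lemma Wfun_inj (hk : 1 ≤ k) (hkm : k < m) (hm : m ≤ n - 1) :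
    Function.Injective (Wfun n k m) := by
  intro a b h
  have h' : (Wfun n k m a).val = (Wfun n k m b).val := congrArg Fin.val h
  rw [Wfun_val, Wfun_val] at h'
  have ha := a.isLt; have hb := b.isLt
  apply Fin.ext
  split_ifs at h' <;> omega

lemma Wfun_bij (hk : 1 ≤ k) (hkm : k < m) (hm : m ≤ n - 1) :
    Function.Bijective (Wfun n k m) :=
  Finite.injective_iff_bijective.mp (Wfun_inj hk hkm hm)

lemma Wfun_H1 (hk : 1 ≤ k) (hkm : k < m) (hm : m ≤ n - 1) :
    ∀ i j : Fin n, i < j → Wfun n k m j < Wfun n k m i →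
      (k ≤ i.val ∧ i.val < k + (n - m)) := by
  intro i j hij hw
  rw [Fin.lt_def] at hij hw
  rw [Wfun_val, Wfun_val] at hw
  have ha := i.isLt; have hb := j.isLt
  split_ifs at hw <;> omega

lemma Wfun_H2 (hk : 1 ≤ k) (hkm : k < m) (hm : m ≤ n - 1) :
    ∀ i j : Fin n, i < j → (k ≤ i.val ∧ i.val < k + (n - m)) →
      Wfun n k m j < Wfun n k m i := by
  intro i j hij hD
  rw [Fin.lt_def] at hij ⊢
  rw [Wfun_val, Wfun_val]
  have ha := i.isLt; have hb := j.isLt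
  split_ifs <;> omega

lemma Wfun_avoids (hk : 1 ≤ k) (hkm : k < m) (hm : m ≤ n - 1) :
    CycAvoids (Wfun n k m) ![1,3,2,4] ∧ CycAvoids (Wfun n k m) ![1,3,4,2] := by
  refine avoid_master (D := fun i => k ≤ i.val ∧ i.val < k + (n - m))
    (Wfun_H1 hk hkm hm) (Wfun_H2 hk hkm hm) ?_
  intro i j l hij hjl hi hl
  rw [Fin.lt_def] at hij hjl
  omega

lemma id_avoids : CycAvoids (id : Fin n → Fin n) ![1,3,2,4] ∧
    CycAvoids (id : Fin n → Fin n) ![1,3,4,2] := by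
  refine avoid_master (D := fun _ => False) ?_ (by simp) (by simp)
  intro i j hij hw
  exact absurd (hij.trans hw) (lt_irrefl _)

end WfunFacts
section Bans
variable {n : ℕ}

lemma strictMono4 {f : Fin 4 → Fin n} (h01 : f 0 < f 1) (h12 : f 1 < f 2)
    (h23 : f 2 < f 3) : StrictMono f := by
  rw [Fin.strictMono_iff_lt_succ]
  intro i
  fin_cases i
  · exact h01
  · exact h12
  · exact h23

lemma cyc1324_of_lin (w : Fin n → Fin n) (a b c d : Fin n)
    (o1 : a < b) (o2 : b < c) (o3 : c < d)
    (h1 : w a < w c) (h2 : w c < w b) (h3 : w b < w d) :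
    CycContains w ![1,3,2,4] := by
  haveI : NeZero n := ⟨a.pos.ne'⟩
  refine ⟨0, ?_⟩
  rw [rotSeq_zero]
  refine ⟨![a,b,c,d], strictMono4 o1 o2 o3, ?_⟩
  have v1 : (w a).val < (w c).val := h1
  have v2 : (w c).val < (w b).val := h2
  have v3 : (w b).val < (w d).val := h3
  intro i j
  fin_cases i <;> fin_cases j <;> simp <;>
    first
      | (rw [Fin.lt_def]; omega)
      | (rw [Fin.le_def]; omega)
      | omega

lemma cyc1342_of_lin (w : Fin n → Fin n) (a b c d : Fin n)
    (o1 : a < b) (o2 : b < c) (o3 : c < d)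
    (h1 : w a < w d) (h2 : w d < w b) (h3 : w b < w c) :
    CycContains w ![1,3,4,2] := by
  haveI : NeZero n := ⟨a.pos.ne'⟩
  refine ⟨0, ?_⟩
  rw [rotSeq_zero]
  refine ⟨![a,b,c,d], strictMono4 o1 o2 o3, ?_⟩
  have v1 : (w a).val < (w d).val := h1
  have v2 : (w d).val < (w b).val := h2
  have v3 : (w b).val < (w c).val := h3
  intro i j
  fin_cases i <;> fin_cases j <;> simp <;>
    first
      | (rw [Fin.lt_def]; omega)
      | (rw [Fin.le_def]; omega)
      | omega

lemma cyc1324_of_lin4132 (w : Fin n → Fin n) (a b c d : Fin n)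
    (o1 : a < b) (o2 : b < c) (o3 : c < d)
    (h1 : w b < w d) (h2 : w d < w c) (h3 : w c < w a) :
    CycContains w ![1,3,2,4] := by
  have hn : 0 < n := a.pos
  have ha := a.isLt; have hb := b.isLt; have hc := c.isLt; have hd := d.isLt
  rw [Fin.lt_def] at o1 o2 o3
  refine ⟨b, ?_⟩
  have e0 : rotSeq w b ⟨0, hn⟩ = w b := by
    show w (⟨0, hn⟩ + b) = w b
    congr 1
    apply Fin.ext
    rw [Fin.val_add]
    show (0 + b.val) % n = b.val
    rw [Nat.zero_add, Nat.mod_eq_of_lt hb]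
  have e1 : rotSeq w b ⟨c.val - b.val, by omega⟩ = w c := by
    show w (⟨c.val - b.val, by omega⟩ + b) = w c
    congr 1
    apply Fin.ext
    rw [Fin.val_add]
    show (c.val - b.val + b.val) % n = c.val
    rw [Nat.sub_add_cancel (by omega), Nat.mod_eq_of_lt hc]
  have e2 : rotSeq w b ⟨d.val - b.val, by omega⟩ = w d := by
    show w (⟨d.val - b.val, by omega⟩ + b) = w d
    congr 1
    apply Fin.ext
    rw [Fin.val_add]
    show (d.val - b.val + b.val) % n = d.val
    rw [Nat.sub_add_cancel (by omega), Nat.mod_eq_of_lt hd]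
  have e3 : rotSeq w b ⟨a.val + n - b.val, by omega⟩ = w a := by
    show w (⟨a.val + n - b.val, by omega⟩ + b) = w a
    congr 1
    apply Fin.ext
    rw [Fin.val_add]
    show (a.val + n - b.val + b.val) % n = a.val
    rw [Nat.sub_add_cancel (by omega), Nat.add_mod_right, Nat.mod_eq_of_lt ha]
  refine ⟨![⟨0, hn⟩, ⟨c.val - b.val, by omega⟩, ⟨d.val - b.val, by omega⟩,
    ⟨a.val + n - b.val, by omega⟩], strictMono4 ?_ ?_ ?_, ?_⟩
  · show (⟨0, hn⟩ : Fin n) < ⟨c.val - b.val, by omega⟩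
    rw [Fin.lt_def]; show 0 < c.val - b.val; omega
  · show (⟨c.val - b.val, by omega⟩ : Fin n) < ⟨d.val - b.val, by omega⟩
    rw [Fin.lt_def]; show c.val - b.val < d.val - b.val; omega
  · show (⟨d.val - b.val, by omega⟩ : Fin n) < ⟨a.val + n - b.val, by omega⟩
    rw [Fin.lt_def]; show d.val - b.val < a.val + n - b.val; omega
  have v1 : (w b).val < (w d).val := h1
  have v2 : (w d).val < (w c).val := h2
  have v3 : (w c).val < (w a).val := h3
  intro i j
  fin_cases i <;> fin_cases j <;> simp [e0, e1, e2, e3] <;>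
    first
      | (rw [Fin.lt_def]; omega)
      | (rw [Fin.le_def]; omega)
      | omega

end Bans
lemma chain_down (g : ℕ → ℕ) (a b : ℕ) (h : ∀ j, a ≤ j → j + 1 ≤ b → g (j+1) < g j) :
    ∀ t, a + t ≤ b → g (a + t) + t ≤ g a := by
  intro t
  induction t with
  | zero => simp
  | succ s ih =>
      intro hs
      have h1 := ih (by omega)
      have h2 := h (a+s) (by omega) (by omega)
      have e : g (a + (s+1)) = g ((a+s)+1) := by rw [Nat.add_succ, Nat.add_succ]
      omega

lemma chain_up (g : ℕ → ℕ) (a b : ℕ) (h : ∀ j, a ≤ j → j + 1 ≤ b → g j < g (j+1)) :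
    ∀ t, a + t ≤ b → g a + t ≤ g (a + t) := by
  intro t
  induction t with
  | zero => simp
  | succ s ih =>
      intro hs
      have h1 := ih (by omega)
      have h2 := h (a+s) (by omega) (by omega)
      have e : g (a + (s+1)) = g ((a+s)+1) := by rw [Nat.add_succ, Nat.add_succ]
      omega

lemma structure_of_avoids {n : ℕ} (hn : 0 < n) (w : Fin n → Fin n)
    (hbij : Function.Bijective w) (h0 : w ⟨0, hn⟩ = ⟨0, hn⟩)
    (hav1 : CycAvoids w ![1,3,2,4]) (hav2 : CycAvoids w ![1,3,4,2]) :
    w = id ∨ ∃ k m : ℕ, 1 ≤ k ∧ k < m ∧ m ≤ n - 1 ∧ w = Wfun n k m := by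
  classical
  set v : ℕ → ℕ := fun i => if h : i < n then (w ⟨i, h⟩).val else i with hvdef
  have hveq : ∀ i (h : i < n), v i = (w ⟨i, h⟩).val := by
    intro i h; simp [hvdef, h]
  have hvlt : ∀ i, i < n → v i < n := by
    intro i h; rw [hveq i h]; exact (w _).isLt
  have hinj : ∀ i j, i < n → j < n → v i = v j → i = j := by
    intro i j hi hj hij
    rw [hveq i hi, hveq j hj] at hij
    have h2 := hbij.1 (a₁ := ⟨i, hi⟩) (a₂ := ⟨j, hj⟩) (Fin.ext hij)
    exact congrArg Fin.val h2
  have hsurj : ∀ y, y < n → ∃ i, i < n ∧ v i = y := by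
    intro y hy
    obtain ⟨x, hx⟩ := hbij.2 ⟨y, hy⟩
    exact ⟨x.val, x.isLt, by rw [hveq x.val x.isLt]; simp [Fin.eta, hx]⟩
  have hv0 : v 0 = 0 := by rw [hveq 0 hn, h0]
  have ban1 : ∀ a b c d : ℕ, a < b → b < c → c < d → d < n →
      v a < v c → v c < v b → v b < v d → False := by
    intro a b c d h1 h2 h3 h4 g1 g2 g3
    have ha : a < n := by omega
    have hb : b < n := by omega
    have hc : c < n := by omega
    rw [hveq a ha, hveq c hc] at g1
    rw [hveq c hc, hveq b hb] at g2
    rw [hveq b hb, hveq d h4] at g3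
    exact hav1 (cyc1324_of_lin w ⟨a, ha⟩ ⟨b, hb⟩ ⟨c, hc⟩ ⟨d, h4⟩
      (Fin.mk_lt_mk.mpr h1) (Fin.mk_lt_mk.mpr h2) (Fin.mk_lt_mk.mpr h3) g1 g2 g3)
  have ban2 : ∀ a b c d : ℕ, a < b → b < c → c < d → d < n →
      v a < v d → v d < v b → v b < v c → False := by
    intro a b c d h1 h2 h3 h4 g1 g2 g3
    have ha : a < n := by omega
    have hb : b < n := by omega
    have hc : c < n := by omega
    rw [hveq a ha, hveq d h4] at g1
    rw [hveq d h4, hveq b hb] at g2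
    rw [hveq b hb, hveq c hc] at g3
    exact hav2 (cyc1342_of_lin w ⟨a, ha⟩ ⟨b, hb⟩ ⟨c, hc⟩ ⟨d, h4⟩
      (Fin.mk_lt_mk.mpr h1) (Fin.mk_lt_mk.mpr h2) (Fin.mk_lt_mk.mpr h3) g1 g2 g3)
  have ban3 : ∀ a b c d : ℕ, a < b → b < c → c < d → d < n →
      v b < v d → v d < v c → v c < v a → False := by
    intro a b c d h1 h2 h3 h4 g1 g2 g3
    have ha : a < n := by omega
    have hb : b < n := by omega
    have hc : c < n := by omega
    rw [hveq b hb, hveq d h4] at g1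
    rw [hveq d h4, hveq c hc] at g2
    rw [hveq c hc, hveq a ha] at g3
    exact hav1 (cyc1324_of_lin4132 w ⟨a, ha⟩ ⟨b, hb⟩ ⟨c, hc⟩ ⟨d, h4⟩
      (Fin.mk_lt_mk.mpr h1) (Fin.mk_lt_mk.mpr h2) (Fin.mk_lt_mk.mpr h3) g1 g2 g3)
  by_cases hid : w = id
  · exact Or.inl hid
  right
  have hex : ∃ i, v i ≠ i := by
    by_contra hc
    push_neg at hc
    apply hid
    funext x
    have := hc x.val
    rw [hveq x.val x.isLt] at this
    simpa using Fin.ext (by simpa using this)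
  set K := Nat.find hex with hKdef
  have hK : v K ≠ K := Nat.find_spec hex
  have hKmin : ∀ i, i < K → v i = i := by
    intro i hi
    by_contra hne
    have h2 : K ≤ i := by rw [hKdef]; exact Nat.find_le hne
    omega
  have hKn : K < n := by
    by_contra hc
    exact hK (by simp [hvdef, show ¬ (K < n) from hc])
  have hK1 : 1 ≤ K := by
    rcases Nat.eq_zero_or_pos K with h | h
    · exact absurd (h ▸ hv0) (h ▸ hK)
    · exact h
  have hKv : K < v K := by
    rcases lt_trichotomy (v K) K with h | h | h
    · exfalso
      have h2 : v (v K) = v K := hKmin _ h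
      have := hinj (v K) K (by omega) hKn h2
      omega
    · exact absurd h hK
    · exact h
  have hKn2 : K ≤ n - 2 := by
    have := hvlt K hKn
    omega
  have hsuffge : ∀ i, K ≤ i → i < n → K ≤ v i := by
    intro i hKi hi
    by_contra hc
    push_neg at hc
    have h2 : v (v i) = v i := hKmin _ hc
    have := hinj (v i) i (by omega) hi h2
    omega
  -- Step 1 : v K = n - 1
  have hvK : v K = n - 1 := by
    by_contra hne
    have hlt : v K < n - 1 := by
      have := hvlt K hKn
      omega
    obtain ⟨q, hq, hvq⟩ := hsurj (n-1) (by omega)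
    obtain ⟨p, hp, hvp⟩ := hsurj K hKn
    have hqK : K < q := by
      rcases lt_trichotomy q K with h | h | h
      · have := hKmin q h; omega
      · exfalso; rw [h] at hvq; omega
      · exact h
    have hpK : K < p := by
      rcases lt_trichotomy p K with h | h | h
      · have := hKmin p h; omega
      · exfalso; rw [h] at hvp; exact hK (by omega)
      · exact h
    have hpq : p ≠ q := by
      intro h; rw [h, hvq] at hvp; omega
    rcases lt_or_gt_of_ne hpq with h | h
    · exact ban1 0 K p q hK1 hpK h hq (by omega) (by omega) (by omega)
    · exact ban2 0 K q p hK1 hqK h hp (by omega) (by omega) (by omega)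
  have hsub : ∀ i, K < i → i < n → K ≤ v i ∧ v i ≤ n - 2 := by
    intro i hKi hi
    refine ⟨hsuffge i (by omega) hi, ?_⟩
    have h1 := hvlt i hi
    by_contra hc
    have : v i = n - 1 := by omega
    have := hinj i K hi hKn (by omega)
    omega
  by_cases hdec : ∀ j, K ≤ j → j + 1 < n → v (j+1) < v j
  · -- Case I : decreasing tail, w = Wfun n K (K+1)
    refine ⟨K, K+1, hK1, by omega, by omega, ?_⟩
    have hfull : ∀ t, K + t ≤ n - 1 → v (K + t) = n - 1 - t := by
      intro t ht
      have hu := chain_down v K (n-1) (fun j hj hj1 => hdec j hj (by omega)) t ht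
      have hl := chain_down v (K+t) (n-1) (fun j hj hj1 => hdec j (by omega) (by omega))
        (n - 1 - (K+t)) (by omega)
      have hge := hsuffge (K + t + (n - 1 - (K + t))) (by omega) (by omega)
      omega
    funext i
    apply Fin.ext
    show (w i).val = (Wfun n K (K+1) i).val
    rw [Wfun_val]
    have hi := i.isLt
    have hwv : (w i).val = v i.val := by rw [hveq i.val hi]
    rcases lt_or_ge i.val K with h | h
    · rw [if_pos h, hwv, hKmin i.val h]
    · rw [if_neg (by omega)]
      have := hfull (i.val - K) (by omega)
      rw [show K + (i.val - K) = i.val by omega] at this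
      rcases lt_or_ge i.val (K + (n - (K+1))) with h2 | h2
      · rw [if_pos h2, hwv]
        omega
      · rw [if_neg (by omega), hwv]
        omega
  · -- Case II
    push_neg at hdec
    have hex2 : ∃ j, K ≤ j ∧ j + 1 < n ∧ v j < v (j+1) := by
      obtain ⟨j, h1, h2, h3⟩ := hdec
      refine ⟨j, h1, h2, ?_⟩
      have hne : v j ≠ v (j+1) := by
        intro h
        have := hinj j (j+1) (by omega) (by omega) h
        omega
      omega
    set d := Nat.find hex2 with hddef
    have hspec := Nat.find_spec hex2
    rw [← hddef] at hspec
    obtain ⟨hdK, hd1, hasc⟩ := hspec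
    have hdmin : ∀ j, j < d → ¬(K ≤ j ∧ j + 1 < n ∧ v j < v (j+1)) := by
      intro j hj
      rw [hddef] at hj
      exact Nat.find_min hex2 hj
    have hdgtK : K < d := by
      rcases Nat.lt_or_ge K d with h | h
      · exact h
      · exfalso
        have hdK' : d = K := by omega
        rw [hdK'] at hasc
        have := hsub (K+1) (by omega) (by omega)
        omega
    have L1 : ∀ j, K ≤ j → j < d → v (j+1) < v j := by
      intro j hj hjd
      have := hdmin j hjd
      push_neg at this
      have h2 := this hj (by omega)
      have hne : v j ≠ v (j+1) := by
        intro h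
        have := hinj j (j+1) (by omega) (by omega) h
        omega
      omega
    have hC : ∀ l, d + 1 < l → l < n → v (d+1) < v l := by
      intro l hl hln
      have hsubl := hsub l (by omega) hln
      have hsubd1 := hsub (d+1) (by omega) (by omega)
      have t1 : ¬(v d < v l ∧ v l < v (d+1)) := by
        intro ⟨u1, u2⟩
        exact ban3 K d (d+1) l hdgtK (by omega) hl hln u1 u2 (by omega)
      have t2 : ¬(v l < v d) := by
        intro u
        exact ban2 0 d (d+1) l (by omega) (by omega) hl hln (by omega) u hasc
      have hne1 : v l ≠ v d := fun h => by
        have := hinj l d hln (by omega) h; omega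
      have hne2 : v l ≠ v (d+1) := fun h => by
        have := hinj l (d+1) hln (by omega) h; omega
      omega
    have hSinc : ∀ l1 l2, d + 1 ≤ l1 → l1 < l2 → l2 < n → v l1 < v l2 := by
      intro l1 l2 hl1 hl2 hl2n
      have hsub1 := hsub l1 (by omega) (by omega)
      have t1 : ¬(v d < v l2 ∧ v l2 < v l1) := by
        intro ⟨u1, u2⟩
        exact ban3 K d l1 l2 hdgtK (by omega) hl2 hl2n u1 u2 (by omega)
      have hdl2 : v d < v l2 := by
        have := hC l2 (by omega) hl2n
        omega
      have hne : v l2 ≠ v l1 := fun h => by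
        have := hinj l2 l1 hl2n (by omega) h; omega
      omega
    have hvd : v d = K := by
      obtain ⟨p, hp, hvp⟩ := hsurj K hKn
      have hpge : K ≤ p := by
        by_contra hc
        push_neg at hc
        have := hKmin p hc
        omega
      have hpne : p ≠ K := by
        intro h
        rw [h] at hvp
        omega
      have hvdge := hsuffge d (by omega) (by omega)
      rcases lt_trichotomy p d with h | h | h
      · exfalso
        have hch := chain_down v p d (fun j hj hj1 => L1 j (by omega) (by omega))
          (d - p) (by omega)
        rw [show p + (d - p) = d by omega] at hch
        omega
      · rw [← h, hvp]
      · exfalso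
        rcases Nat.eq_or_lt_of_le (show d + 1 ≤ p by omega) with h2 | h2
        · rw [← h2] at hvp
          omega
        · have hc1 := hC p h2 hp
          have hc2 := hsub (d+1) (by omega) (by omega)
          omega
    have hSB : ∀ i l, K < i → i < d → d < l → l < n → v l < v i := by
      intro i l hKi hid hdl hln
      have hvi : K < v i := by
        have h1 := hsuffge i (by omega) (by omega)
        have hne : v i ≠ K := fun h => by
          have := hinj i d (by omega) (by omega) (by rw [h, hvd])
          omega
        omega
      have t1 : ¬(v i < v l) := by
        intro u
        exact ban1 0 i d l (by omega) hid hdl hln (by omega) (by omega) u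
      have hne : v l ≠ v i := fun h => by
        have := hinj l i hln (by omega) h; omega
      omega
    set m := K + n - d with hmdef
    have hub : v (d-1) + (d - 1 - K) ≤ n - 1 := by
      have hch := chain_down v K (d-1) (fun j hj hj1 => L1 j hj (by omega))
        (d - 1 - K) (by omega)
      rw [show K + (d - 1 - K) = d - 1 by omega] at hch
      omega
    have hlb : K + (n - 1 - d) ≤ v (n - 1) := by
      have hch := chain_up v d (n-1)
        (fun j hj hj1 => by
          rcases Nat.eq_or_lt_of_le hj with h | h
          · rw [← h]; exact hasc
          · exact hSinc j (j+1) (by omega) (by omega) (by omega))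
        (n - 1 - d) (by omega)
      rw [show d + (n - 1 - d) = n - 1 by omega] at hch
      omega
    have hcross : v (n-1) < v (d-1) := by
      rcases Nat.eq_or_lt_of_le (show K ≤ d - 1 by omega) with h | h
      · rw [← h, hvK]
        have := hsub (n-1) (by omega) (by omega)
        omega
      · exact hSB (d-1) (n-1) h (by omega) (by omega) (by omega)
    have heq1 : v (d-1) = m := by omega
    have heq2 : v (n-1) = m - 1 := by omega
    have hblock : ∀ j, K ≤ j → j < d → v j = n - 1 - (j - K) := by
      intro j hj hjd
      have hch1 := chain_down v K (d-1) (fun j hj hj1 => L1 j hj (by omega))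
        (j - K) (by omega)
      rw [show K + (j - K) = j by omega] at hch1
      have hch2 := chain_down v j (d-1) (fun j2 hj2 hj21 => L1 j2 (by omega) (by omega))
        (d - 1 - j) (by omega)
      rw [show j + (d - 1 - j) = d - 1 by omega] at hch2
      omega
    have hsuffix : ∀ l, d ≤ l → l < n → v l = K + (l - d) := by
      intro l hl hln
      have hch1 := chain_up v d (n-1)
        (fun j hj hj1 => by
          rcases Nat.eq_or_lt_of_le hj with h | h
          · rw [← h]; exact hasc
          · exact hSinc j (j+1) (by omega) (by omega) (by omega))
        (l - d) (by omega)
      rw [show d + (l - d) = l by omega] at hch1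
      have hch2 := chain_up v l (n-1)
        (fun j hj hj1 => by
          rcases Nat.eq_or_lt_of_le (show d ≤ j by omega) with h | h
          · rw [← h]; exact hasc
          · exact hSinc j (j+1) (by omega) (by omega) (by omega))
        (n - 1 - l) (by omega)
      rw [show l + (n - 1 - l) = n - 1 by omega] at hch2
      omega
    refine ⟨K, m, hK1, by omega, by omega, ?_⟩
    have hnm : n - m = d - K := by omega
    funext i
    apply Fin.ext
    show (w i).val = (Wfun n K m i).val
    rw [Wfun_val]
    have hi := i.isLt
    have hwv : (w i).val = v i.val := by rw [hveq i.val hi]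
    rcases lt_or_ge i.val K with h | h
    · rw [if_pos h, hwv, hKmin i.val h]
    · rw [if_neg (by omega), hnm]
      rcases lt_or_ge i.val d with h2 | h2
      · rw [if_pos (by omega), hwv, hblock i.val h h2]
      · rw [if_neg (by omega), hwv, hsuffix i.val h2 hi]
        omega
theorem card_av_1324_1342 (n : ℕ) (hn : 1 ≤ n) :
    (AvClasses n fun σ => CycAvoids σ ![1,3,2,4] ∧ CycAvoids σ ![1,3,4,2]).ncard = 1 + Nat.choose (n - 1) 2 := by
  classical
  have hn0 : 0 < n := hn
  haveI : NeZero n := ⟨hn0.ne'⟩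
  set z : Fin n := ⟨0, hn0⟩ with hz
  set S : Set (Fin n → Fin n) :=
    {σ | Function.Bijective σ ∧ σ z = z ∧ CycAvoids σ ![1,3,2,4] ∧ CycAvoids σ ![1,3,4,2]}
    with hS
  -- Step 1: classes are in bijection with canonical representatives
  have hzero : ∀ (r : Fin n), z + r = r := by
    intro r
    apply Fin.ext
    rw [Fin.val_add]
    show (0 + r.val) % n = r.val
    rw [Nat.zero_add, Nat.mod_eq_of_lt r.isLt]
  have hAv : (AvClasses n fun σ => CycAvoids σ ![1,3,2,4] ∧ CycAvoids σ ![1,3,4,2])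
      = CycClass '' S := by
    ext C
    constructor
    · rintro ⟨σ, rfl, hp1, hp2⟩
      set r : Fin n := σ.symm z with hr
      refine ⟨rotSeq ⇑σ r, ⟨?_, ?_, ?_, ?_⟩, (cycClass_rotSeq ⇑σ r).symm ▸ rfl⟩
      · have he : rotSeq ⇑σ r = ⇑σ ∘ ⇑(Equiv.addRight r) := by
          funext i; rfl
        rw [he]
        exact σ.bijective.comp (Equiv.addRight r).bijective
      · show σ (z + r) = z
        rw [hzero r, hr, Equiv.apply_symm_apply]
      · intro hc
        exact hp1 ((cycContains_rotSeq ⇑σ r _).mp hc)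
      · intro hc
        exact hp2 ((cycContains_rotSeq ⇑σ r _).mp hc)
    · rintro ⟨σ, ⟨hbij, h00, ha1, ha2⟩, rfl⟩
      exact ⟨Equiv.ofBijective σ hbij, rfl, ha1, ha2⟩
  have hself : ∀ σ : Fin n → Fin n, rotSeq σ z = σ := by
    intro σ
    funext i
    show σ (i + z) = σ i
    congr 1
    apply Fin.ext
    rw [Fin.val_add]
    show (i.val + 0) % n = i.val
    rw [Nat.add_zero, Nat.mod_eq_of_lt i.isLt]
  have hinjOn : Set.InjOn CycClass S := by
    rintro σ ⟨hb1, h01, _⟩ τ ⟨hb2, h02, _⟩ hC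
    have hτ : τ ∈ CycClass σ := by
      rw [hC]
      exact ⟨z, hself τ⟩
    obtain ⟨r, hr⟩ := hτ
    have h2 : σ (z + r) = z := by
      have : rotSeq σ r z = τ z := by rw [hr]
      rw [h02] at this
      exact this
    rw [hzero r] at h2
    have h3 : r = z := hb1.1 (h2.trans h01.symm)
    rw [← hr, h3, hself]
  rw [hAv, Set.ncard_image_of_injOn hinjOn]
  -- Step 2: identify S
  have hSid : S = insert (id : Fin n → Fin n)
      ((fun p : ℕ × ℕ => Wfun n p.1 p.2) ''
        {p : ℕ × ℕ | 1 ≤ p.1 ∧ p.1 < p.2 ∧ p.2 ≤ n - 1}) := by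
    ext σ
    constructor
    · rintro ⟨hbij, h00, ha1, ha2⟩
      rcases structure_of_avoids hn0 σ hbij h00 ha1 ha2 with h | ⟨k, m, h1, h2, h3, h4⟩
      · exact Or.inl h
      · exact Or.inr ⟨(k, m), ⟨h1, h2, h3⟩, h4.symm⟩
    · rintro (rfl | ⟨⟨k, m⟩, ⟨h1, h2, h3⟩, rfl⟩)
      · exact ⟨Function.bijective_id, rfl, id_avoids.1, id_avoids.2⟩
      · refine ⟨Wfun_bij h1 h2 h3, ?_, (Wfun_avoids h1 h2 h3).1, (Wfun_avoids h1 h2 h3).2⟩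
        apply Fin.ext
        rw [Wfun_val]
        show (if 0 < k then 0 else if 0 < k + (n - m) then n - 1 - (0 - k) else 0 - (n - m))
          = z.val
        rw [if_pos (by omega)]
  rw [hSid]
  -- Step 3: count
  have hWk : ∀ k m : ℕ, 1 ≤ k → k < m → m ≤ n - 1 → ∀ (hkn : k < n),
      (Wfun n k m ⟨k, hkn⟩).val = n - 1 := by
    intro k m h1 h2 h3 hkn
    rw [Wfun_val]
    show (if k < k then k else if k < k + (n - m) then n - 1 - (k - k) else k - (n - m)) = n - 1
    rw [if_neg (by omega), if_pos (by omega)]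
    omega
  have hWlast : ∀ k m : ℕ, 1 ≤ k → k < m → m ≤ n - 1 → ∀ (hn1 : n - 1 < n),
      (Wfun n k m ⟨n-1, hn1⟩).val = m - 1 := by
    intro k m h1 h2 h3 hn1
    rw [Wfun_val]
    show (if n - 1 < k then n - 1 else if n - 1 < k + (n - m) then n - 1 - (n - 1 - k)
      else n - 1 - (n - m)) = m - 1
    rw [if_neg (by omega), if_neg (by omega)]
    omega
  have hidni : (id : Fin n → Fin n) ∉
      ((fun p : ℕ × ℕ => Wfun n p.1 p.2) ''
        {p : ℕ × ℕ | 1 ≤ p.1 ∧ p.1 < p.2 ∧ p.2 ≤ n - 1}) := by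
    rintro ⟨⟨k, m⟩, ⟨h1, h2, h3⟩, heq⟩
    have heq' : Wfun n k m = id := heq
    have hthis := hWk k m h1 h2 h3 (by omega)
    rw [heq'] at hthis
    simp at hthis
    omega
  have hWinj : Set.InjOn (fun p : ℕ × ℕ => Wfun n p.1 p.2)
      {p : ℕ × ℕ | 1 ≤ p.1 ∧ p.1 < p.2 ∧ p.2 ≤ n - 1} := by
    rintro ⟨k, m⟩ ⟨h1, h2, h3⟩ ⟨k', m'⟩ ⟨h1', h2', h3'⟩ heq
    simp only at heq
    have hkk : k = k' := by
      by_contra hne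
      rcases Nat.lt_or_ge k k' with h | h
      · have e1 := hWk k m h1 h2 h3 (by omega)
        have e2 : (Wfun n k' m' ⟨k, by omega⟩).val = k := by
          rw [Wfun_val]
          show (if k < k' then k else if k < k' + (n - m') then n - 1 - (k - k')
            else k - (n - m')) = k
          rw [if_pos (by omega)]
        rw [heq] at e1
        rw [e1] at e2
        omega
      · have e1 := hWk k' m' h1' h2' h3' (by omega)
        have e2 : (Wfun n k m ⟨k', by omega⟩).val = k' := by
          rw [Wfun_val]
          show (if k' < k then k' else if k' < k + (n - m) then n - 1 - (k' - k)
            else k' - (n - m)) = k'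
          rw [if_pos (by omega)]
        rw [← heq] at e1
        rw [e1] at e2
        omega
    have hmm : m = m' := by
      have e1 := hWlast k m h1 h2 h3 (by omega)
      have e2 := hWlast k' m' h1' h2' h3' (by omega)
      rw [heq] at e1
      rw [e1] at e2
      omega
    rw [hkk, hmm]
  rw [Set.ncard_insert_of_notMem hidni (Set.toFinite _),
    Set.ncard_image_of_injOn hWinj]
  rw [Nat.add_comm]
  congr 1
  -- count the parameter set
  have hPeq : {p : ℕ × ℕ | 1 ≤ p.1 ∧ p.1 < p.2 ∧ p.2 ≤ n - 1} =
      ↑((Finset.Icc 1 (n-1)).biUnion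
        (fun m2 => (Finset.Ico 1 m2).image (fun k => (k, m2)))) := by
    ext ⟨k, m⟩
    simp only [Set.mem_setOf_eq, Finset.coe_biUnion, Finset.mem_coe, Finset.mem_Icc,
      Set.mem_iUnion, Finset.mem_image, Finset.mem_Ico, Finset.coe_Icc, Set.mem_Icc]
    constructor
    · rintro ⟨h1, h2, h3⟩
      exact ⟨m, ⟨by omega, h3⟩, k, ⟨h1, h2⟩, rfl⟩
    · rintro ⟨m2, ⟨hm1, hm2⟩, k2, ⟨hk1, hk2⟩, heq⟩
      injection heq with e1 e2
      omega
  rw [hPeq, Set.ncard_coe_finset]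
  rw [Finset.card_biUnion (by
    intro x hx y hy hxy
    rw [Function.onFun, Finset.disjoint_left]
    rintro ⟨a, b⟩ ha hb
    simp only [Finset.mem_image, Finset.mem_Ico] at ha hb
    obtain ⟨_, _, e1⟩ := ha
    obtain ⟨_, _, e2⟩ := hb
    apply hxy
    injection e1 with _ f1
    injection e2 with _ f2
    omega)]
  have hcardim : ∀ m2 : ℕ, ((Finset.Ico 1 m2).image (fun k => (k, m2))).card = m2 - 1 := by
    intro m2
    rw [Finset.card_image_of_injective _ (by intro a b hab; injection hab)]
    simp
  simp only [hcardim]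
  have hicc : Finset.Icc 1 (n-1) = (Finset.range (n-1)).image (· + 1) := by
    ext x
    simp only [Finset.mem_Icc, Finset.mem_image, Finset.mem_range]
    constructor
    · intro ⟨h1, h2⟩; exact ⟨x - 1, by omega, by omega⟩
    · rintro ⟨y, hy, rfl⟩; omega
  rw [hicc, Finset.sum_image (by intro a _ b _ hab; exact Nat.add_right_cancel hab)]
  simp only [Nat.add_sub_cancel]
  rw [Finset.sum_range_id, Nat.choose_two_right]
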